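/- arXiv:2010.02425 — 4 statements merged into one kernel-verified Lean document; each statement's English description precedes it below -/
import Mathlib

section
/- For all 0 < ε ≤ 1, the set T¹_{d,b} of separable probability tensors (outer products of d probability vectors in Δ_b) admits an ε-cover in ℓ¹-norm of cardinality at most (2bd/ε)^{bd}. -/
open Finset

/-- `p` is a probability vector: nonnegative entries summing to 1. -/
def IsProbVec {b : ℕ} (p : Fin b → ℝ) : Prop :=
  (∀ i, 0 ≤ p i) ∧ ∑ i, p i = 1

/-- Separable probability tensors: outer products of `d` probability vectors in `Δ_b`. -/
def SepTensors (d b : ℕ) : Set ((Fin d → Fin b) → ℝ) :=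
  {T | ∃ p : Fin d → Fin b → ℝ, (∀ i, IsProbVec (p i)) ∧
    T = fun A => ∏ i, p i (A i)}

lemma sum_pi_prod {n b : ℕ} (f : Fin n → Fin b → ℝ) :
    ∑ A : Fin n → Fin b, ∏ i, f i (A i) = ∏ i, ∑ j, f i j :=
  (Fintype.prod_sum f).symm

lemma tensor_l1 {b : ℕ} : ∀ {n : ℕ} (p q : Fin n → Fin b → ℝ),
    (∀ i, IsProbVec (p i)) → (∀ i, IsProbVec (q i)) →
    ∑ A : Fin n → Fin b, |∏ i, p i (A i) - ∏ i, q i (A i)| ≤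
      ∑ i, ∑ j, |p i j - q i j| := by
  intro n
  induction n with
  | zero => intro p q _ _; simp
  | succ n ih =>
    intro p q hp hq
    have key : ∑ A : Fin (n+1) → Fin b, |∏ i, p i (A i) - ∏ i, q i (A i)|
        = ∑ x : Fin b, ∑ B : Fin n → Fin b,
            |p 0 x * ∏ i, p i.succ (B i) - q 0 x * ∏ i, q i.succ (B i)| := by
      rw [← (Fin.consEquiv (fun _ : Fin (n+1) => Fin b)).sum_comp, Fintype.sum_prod_type]
      simp [Fin.prod_univ_succ, Fin.consEquiv]
    rw [key, Fin.sum_univ_succ]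
    have step : ∀ x : Fin b, ∀ B : Fin n → Fin b,
        |p 0 x * ∏ i, p i.succ (B i) - q 0 x * ∏ i, q i.succ (B i)| ≤
          p 0 x * |∏ i, p i.succ (B i) - ∏ i, q i.succ (B i)|
          + |p 0 x - q 0 x| * ∏ i, q i.succ (B i) := by
      intro x B
      have h1 : p 0 x * ∏ i, p i.succ (B i) - q 0 x * ∏ i, q i.succ (B i)
          = p 0 x * (∏ i, p i.succ (B i) - ∏ i, q i.succ (B i))
            + (p 0 x - q 0 x) * ∏ i, q i.succ (B i) := by ring
      rw [h1]
      refine (abs_add_le _ _).trans ?_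
      rw [abs_mul, abs_mul, abs_of_nonneg ((hp 0).1 x),
        abs_of_nonneg (Finset.prod_nonneg fun i _ => (hq i.succ).1 (B i))]
    calc ∑ x : Fin b, ∑ B : Fin n → Fin b,
            |p 0 x * ∏ i, p i.succ (B i) - q 0 x * ∏ i, q i.succ (B i)|
        ≤ ∑ x : Fin b, ∑ B : Fin n → Fin b,
            (p 0 x * |∏ i, p i.succ (B i) - ∏ i, q i.succ (B i)|
             + |p 0 x - q 0 x| * ∏ i, q i.succ (B i)) := by
          exact Finset.sum_le_sum fun x _ => Finset.sum_le_sum fun B _ => step x B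
      _ = (∑ x, p 0 x) * (∑ B : Fin n → Fin b, |∏ i, p i.succ (B i) - ∏ i, q i.succ (B i)|)
          + (∑ x, |p 0 x - q 0 x|) * (∑ B : Fin n → Fin b, ∏ i, q i.succ (B i)) := by
          simp [Finset.sum_add_distrib, ← Finset.mul_sum, ← Finset.sum_mul]
      _ ≤ ∑ j, |p 0 j - q 0 j| + ∑ i : Fin n, ∑ j, |p i.succ j - q i.succ j| := by
          rw [(hp 0).2, sum_pi_prod, one_mul]
          have : ∏ i : Fin n, ∑ j, q i.succ j = 1 := by
            rw [Finset.prod_eq_one]; intro i _; exact (hq i.succ).2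
          rw [this, mul_one]
          have := ih (fun i => p i.succ) (fun i => q i.succ)
            (fun i => hp i.succ) (fun i => hq i.succ)
          linarith

lemma round_simplex (c m : ℕ) (hm : 0 < m) (p : Fin (c+1) → ℝ) (hp : IsProbVec p) :
    ∃ q : Fin (c+1) → ℝ, IsProbVec q ∧ (∃ g : Fin (c+1) → Fin (m+1), q = fun j => (g j : ℝ)/m)
      ∧ ∑ j, |p j - q j| ≤ 2*c/m := by
  obtain ⟨hp0, hp1⟩ := hp
  have hmR : (0:ℝ) < m := by exact_mod_cast hm
  set ν : Fin c → ℝ := fun i => (⌊p i.succ * m⌋₊ : ℝ)/m with hν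
  have hνle : ∀ i, ν i ≤ p i.succ := by
    intro i
    rw [hν, div_le_iff₀ hmR]
    exact Nat.floor_le (mul_nonneg (hp0 _) hmR.le)
  have hνge : ∀ i, p i.succ - 1/m ≤ ν i := by
    intro i
    have := Nat.lt_floor_add_one (p i.succ * m)
    rw [hν]
    rw [sub_le_iff_le_add, ← add_div, le_div_iff₀ hmR]
    push_cast
    linarith
  have hνnn : ∀ i, 0 ≤ ν i := fun i => div_nonneg (Nat.cast_nonneg _) hmR.le
  have hsum : ∑ i : Fin c, p i.succ = 1 - p 0 := by
    rw [Fin.sum_univ_succ] at hp1; linarith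
  have hνsum : ∑ i, ν i ≤ 1 - p 0 := by
    rw [← hsum]; exact Finset.sum_le_sum fun i _ => hνle i
  set q : Fin (c+1) → ℝ := Fin.cons (1 - ∑ i, ν i) ν with hq
  refine ⟨q, ⟨?_, ?_⟩, ?_, ?_⟩
  · intro j
    refine Fin.cases ?_ ?_ j
    · rw [hq]; simp only [Fin.cons_zero]
      have := hp0 0; linarith
    · intro i; rw [hq]; simp only [Fin.cons_succ]; exact hνnn i
  · rw [Fin.sum_univ_succ, hq]
    simp
  · -- grid membership
    have hk : ∀ i : Fin c, ⌊p i.succ * m⌋₊ ≤ m := by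
      intro i
      have h1 : p i.succ ≤ 1 := by
        have := Finset.single_le_sum (f := p) (fun j _ => hp0 j) (Finset.mem_univ i.succ)
        linarith [hp1 ▸ this]
      calc ⌊p i.succ * m⌋₊ ≤ ⌊(m:ℝ)⌋₊ := Nat.floor_le_floor (by nlinarith)
        _ = m := Nat.floor_natCast m
    have hks : ∑ i : Fin c, ⌊p i.succ * m⌋₊ ≤ m := by
      have : (↑(∑ i : Fin c, ⌊p i.succ * m⌋₊) : ℝ) ≤ m := by
        push_cast
        have : ∑ i : Fin c, (⌊p i.succ * m⌋₊ : ℝ) = (∑ i, ν i) * m := by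
          rw [Finset.sum_mul, hν]; congr 1; ext i; field_simp
        rw [this]
        nlinarith [hp0 0]
      exact_mod_cast this
    refine ⟨Fin.cons ⟨m - ∑ i : Fin c, ⌊p i.succ * m⌋₊, by omega⟩
      (fun i => ⟨⌊p i.succ * m⌋₊, by have := hk i; omega⟩), ?_⟩
    funext j
    refine Fin.cases ?_ ?_ j
    · simp only [hq, Fin.cons_zero]
      rw [eq_div_iff hmR.ne']
      push_cast [Nat.cast_sub hks]
      have : ∑ i : Fin c, (⌊p i.succ * m⌋₊ : ℝ) = (∑ i, ν i) * m := by
        rw [Finset.sum_mul, hν]; congr 1; ext i; field_simp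
      rw [sub_mul, one_mul, this]
    · intro i; simp only [hq, Fin.cons_succ, hν]
  · rw [Fin.sum_univ_succ]
    simp only [hq, Fin.cons_zero, Fin.cons_succ]
    have h1 : |p 0 - (1 - ∑ i, ν i)| = ∑ i, (p i.succ - ν i) := by
      rw [Finset.sum_sub_distrib, hsum]
      rw [abs_of_nonpos (by linarith)]
      ring
    have h2 : ∀ i, |p i.succ - ν i| = p i.succ - ν i :=
      fun i => abs_of_nonneg (by linarith [hνle i])
    rw [h1]
    have h3 : ∑ i, (p i.succ - ν i) ≤ c * (1/m) := by
      calc ∑ i, (p i.succ - ν i) ≤ ∑ _i : Fin c, 1/(m:ℝ) :=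
            Finset.sum_le_sum fun i _ => by linarith [hνge i]
        _ = c * (1/m) := by simp [mul_comm]
      
    calc ∑ i, (p i.succ - ν i) + ∑ i, |p i.succ - ν i|
        = ∑ i, (p i.succ - ν i) + ∑ i, (p i.succ - ν i) := by
          congr 1; exact Finset.sum_congr rfl fun i _ => h2 i
      _ ≤ c * (1/m) + c * (1/m) := by linarith
      _ = 2*c/m := by ring

theorem sep_tensor_cover (d b : ℕ) (hd : 0 < d) (hb : 0 < b)
    (ε : ℝ) (hε : 0 < ε) (hε1 : ε ≤ 1) :
    ∃ S : Finset ((Fin d → Fin b) → ℝ),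
      (∀ T ∈ S, T ∈ SepTensors d b) ∧
      (S.card : ℝ) ≤ (2 * b * d / ε) ^ (b * d) ∧
      ∀ T ∈ SepTensors d b, ∃ T' ∈ S, ∑ A, |T A - T' A| ≤ ε := by
  classical
  obtain ⟨c, rfl⟩ : ∃ c, b = c + 1 := ⟨b - 1, by omega⟩
  set m : ℕ := max 1 ⌈2 * c * d / ε⌉₊ with hmdef
  have hm : 0 < m := lt_of_lt_of_le one_pos (le_max_left _ _)
  have hmR : (0:ℝ) < m := by exact_mod_cast hm
  have hdR : (1:ℝ) ≤ d := by exact_mod_cast hd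
  have hx0 : (0:ℝ) ≤ 2 * c * d / ε := by positivity
  have hm_lb : 2 * (c:ℝ) * d / ε ≤ m := by
    refine (Nat.le_ceil _).trans ?_
    exact Nat.cast_le.mpr (le_max_right 1 ⌈2 * (c:ℝ) * d / ε⌉₊)
  have hm_ub : (m:ℝ) + 1 ≤ 2 * ((c:ℝ)+1) * d / ε := by
    have h1 : (m:ℝ) ≤ 2 * c * d / ε + 1 := by
      rw [hmdef]
      push_cast [Nat.cast_max]
      refine max_le (by linarith) ?_
      exact le_of_lt (Nat.ceil_lt_add_one hx0)
    have h2 : (2:ℝ) ≤ 2 * d / ε := by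
      rw [le_div_iff₀ hε]; nlinarith
    have h3 : 2 * ((c:ℝ)+1) * d / ε = 2 * c * d / ε + 2 * d / ε := by
      field_simp
    linarith
  set F : Finset (Fin (c+1) → ℝ) :=
    ((univ : Finset (Fin (c+1) → Fin (m+1))).image
      (fun g => fun j => (g j : ℝ)/m)).filter IsProbVec with hF
  set S : Finset ((Fin d → Fin (c+1)) → ℝ) :=
    (Fintype.piFinset fun _ : Fin d => F).image
      (fun q => fun A => ∏ i, q i (A i)) with hS
  have hFsep : ∀ q ∈ F, IsProbVec q := fun q hq => (Finset.mem_filter.1 hq).2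
  refine ⟨S, ?_, ?_, ?_⟩
  · intro T hT
    obtain ⟨q, hq, rfl⟩ := Finset.mem_image.1 hT
    exact ⟨q, fun i => hFsep _ (Fintype.mem_piFinset.1 hq i), rfl⟩
  · have h1 : S.card ≤ F.card ^ d := by
      refine (Finset.card_image_le).trans ?_
      rw [Fintype.card_piFinset]
      simp
    have h2 : F.card ≤ (m+1) ^ (c+1) := by
      refine (Finset.card_filter_le _ _).trans ?_
      refine (Finset.card_image_le).trans ?_
      simp [Fintype.card_fun]
    have h3 : S.card ≤ (m+1) ^ ((c+1) * d) := by
      calc S.card ≤ ((m+1) ^ (c+1)) ^ d := h1.trans (Nat.pow_le_pow_left h2 d)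
        _ = (m+1) ^ ((c+1) * d) := by rw [← pow_mul]
    calc (S.card : ℝ) ≤ ((m:ℝ)+1) ^ ((c+1) * d) := by exact_mod_cast h3
      _ ≤ (2 * ((c:ℝ)+1) * d / ε) ^ ((c+1) * d) := by
          exact pow_le_pow_left₀ (by positivity) hm_ub _
      _ = (2 * ↑(c+1) * ↑d / ε) ^ ((c+1) * d) := by push_cast; ring_nf
  · rintro T ⟨p, hp, rfl⟩
    choose q hq hgrid hdist using fun i => round_simplex c m hm (p i) (hp i)
    choose g hg using hgrid
    have hqF : ∀ i, q i ∈ F :=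
      fun i => Finset.mem_filter.2
        ⟨Finset.mem_image.2 ⟨g i, Finset.mem_univ _, (hg i).symm⟩, hq i⟩
    refine ⟨fun A => ∏ i, q i (A i),
      Finset.mem_image.2 ⟨q, Fintype.mem_piFinset.2 hqF, rfl⟩, ?_⟩
    refine (tensor_l1 p q hp hq).trans ?_
    calc ∑ i, ∑ j, |p i j - q i j| ≤ ∑ _i : Fin d, 2*(c:ℝ)/m :=
          Finset.sum_le_sum fun i _ => hdist i
      _ = d * (2*c/m) := by simp [mul_comm]
      _ ≤ ε := by
          rw [div_le_iff₀ hε] at hm_lb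
          rw [mul_div_assoc'] at *
          rw [div_le_iff₀ hmR]
          nlinarith
end

section
/- For all 0 < ε ≤ 1, the set T^k_{d,b} of probability tensors expressible as a convex combination of k separable probability tensors admits an ε-cover in ℓ¹-norm of cardinality at most (4bd/ε)^{bdk} · (4k/ε)^k. -/
open Finset

/-- Multi-view probability tensors: convex combinations of `k` separable probability
tensors in `ℝ^{b×⋯×b}` (`d` modes). -/
def MultiViewTensors (d b k : ℕ) : Set ((Fin d → Fin b) → ℝ) :=
  {T | ∃ w : Fin k → ℝ, IsProbVec w ∧ ∃ p : Fin k → Fin d → Fin b → ℝ,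
    (∀ i j, IsProbVec (p i j)) ∧
    T = fun A => ∑ i, w i * ∏ j, p i j (A j)}


section RoundVec
variable {b : ℕ} [NeZero b]

noncomputable def gridVec (M : ℕ) (n : Fin b → Fin M) : Fin b → ℝ :=
  if (∑ i ∈ univ.erase 0, (n i : ℝ) / M) ≤ 1 then
    fun i => if i = 0 then 1 - ∑ i' ∈ univ.erase 0, (n i' : ℝ) / M else (n i : ℝ) / M
  else fun i => if i = (0 : Fin b) then 1 else 0

lemma sum_erase_congr (M : ℕ) (n : Fin b → Fin M) :
    ∑ i ∈ univ.erase (0:Fin b), (if i = 0 then 1 - ∑ i' ∈ univ.erase (0:Fin b), (n i' : ℝ) / M else (n i : ℝ) / M)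
      = ∑ i ∈ univ.erase (0:Fin b), (n i : ℝ) / M :=
  Finset.sum_congr rfl (fun i hi => if_neg (Finset.ne_of_mem_erase hi))

lemma gridVec_isProbVec (M : ℕ) (n : Fin b → Fin M) : IsProbVec (gridVec M n) := by
  unfold gridVec
  split_ifs with h
  · constructor
    · intro i
      by_cases hi : i = 0
      · subst hi; simp only [if_pos rfl, if_true]; linarith
      · simp only [if_neg hi]; positivity
    · rw [← Finset.add_sum_erase univ _ (mem_univ (0 : Fin b)), if_pos rfl, sum_erase_congr]
      ring
  · constructor
    · intro i; by_cases hi : i = 0 <;> simp [hi]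
    · simp

noncomputable def roundIdx (M : ℕ) (hM : 0 < M) (p : Fin b → ℝ) : Fin b → Fin M :=
  fun i => ⟨min ⌊p i * M⌋₊ (M - 1), lt_of_le_of_lt (min_le_right _ _) (Nat.sub_lt hM one_pos)⟩

lemma roundIdx_close (M : ℕ) (hM : 0 < M) (p : Fin b → ℝ) (hp : IsProbVec p) :
    ∑ i, |gridVec M (roundIdx M hM p) i - p i| ≤ 2 * (b - 1) / M := by
  obtain ⟨hp0, hp1⟩ := hp
  have hMR : (0:ℝ) < M := by exact_mod_cast hM
  set n := roundIdx M hM p with hn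
  have hple : ∀ i, p i ≤ 1 := by
    intro i
    calc p i ≤ ∑ i', p i' := Finset.single_le_sum (fun i' _ => hp0 i') (mem_univ i)
    _ = 1 := hp1
  have hle : ∀ i, (n i : ℝ) / M ≤ p i := by
    intro i
    rw [div_le_iff₀ hMR]
    have h1 : (n i : ℕ) ≤ ⌊p i * M⌋₊ := min_le_left _ _
    have h2 : (⌊p i * M⌋₊ : ℝ) ≤ p i * M := Nat.floor_le (mul_nonneg (hp0 i) hMR.le)
    calc ((n i : ℕ) : ℝ) ≤ (⌊p i * M⌋₊ : ℝ) := by exact_mod_cast h1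
    _ ≤ p i * M := h2
  have hge : ∀ i, p i - 1 / M ≤ (n i : ℝ) / M := by
    intro i
    have key : p i * M - 1 ≤ ((n i : ℕ) : ℝ) := by
      have hcast : ((n i : ℕ) : ℝ) = min ((⌊p i * M⌋₊ : ℕ) : ℝ) (((M - 1 : ℕ)) : ℝ) := by
        rw [hn]; simp [roundIdx, Nat.cast_min]
      rw [hcast, le_min_iff]
      constructor
      · have := Nat.sub_one_lt_floor (p i * M)
        linarith
      · have hc : ((M - 1 : ℕ) : ℝ) = (M : ℝ) - 1 := by
          rw [Nat.cast_sub hM]; norm_num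
        rw [hc]
        nlinarith [hple i]
    rw [le_div_iff₀ hMR]
    have : (p i - 1 / M) * M = p i * M - 1 := by field_simp
    linarith
  -- now the valid branch is taken
  have hval : (∑ i ∈ univ.erase (0:Fin b), (n i : ℝ) / M) ≤ 1 := by
    calc ∑ i ∈ univ.erase (0:Fin b), (n i : ℝ) / M ≤ ∑ i ∈ univ.erase (0:Fin b), p i :=
          Finset.sum_le_sum (fun i _ => hle i)
    _ = 1 - p 0 := by
          rw [← hp1, ← Finset.add_sum_erase univ p (mem_univ (0 : Fin b))]; ring
    _ ≤ 1 := by linarith [hp0 0]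
  have hq : gridVec M n = fun i => if i = 0 then 1 - ∑ i' ∈ univ.erase 0, (n i' : ℝ) / M else (n i : ℝ) / M := by
    unfold gridVec; rw [if_pos hval]
  rw [hq]
  rw [← Finset.add_sum_erase univ _ (mem_univ (0 : Fin b))]
  have herase : ∑ i ∈ univ.erase (0:Fin b),
      |(if i = (0:Fin b) then 1 - ∑ i' ∈ univ.erase 0, (n i' : ℝ) / M else (n i : ℝ) / M) - p i|
      ≤ ∑ i ∈ univ.erase (0:Fin b), (1 : ℝ) / M := by
    apply Finset.sum_le_sum
    intro i hi
    rw [if_neg (Finset.ne_of_mem_erase hi), abs_sub_comm, abs_of_nonneg (by linarith [hle i])]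
    linarith [hge i]
  have h0 : |(if (0:Fin b) = (0:Fin b) then 1 - ∑ i' ∈ univ.erase 0, (n i' : ℝ) / M else (n 0 : ℝ) / M) - p 0|
      ≤ ((b:ℝ) - 1) / M := by
    rw [if_pos rfl]
    have e1 : 1 - ∑ i' ∈ univ.erase (0:Fin b), (n i' : ℝ) / M - p 0
        = ∑ i ∈ univ.erase (0:Fin b), (p i - (n i : ℝ) / M) := by
      rw [Finset.sum_sub_distrib]
      have : ∑ i ∈ univ.erase (0:Fin b), p i = 1 - p 0 := by
        rw [← hp1, ← Finset.add_sum_erase univ p (mem_univ (0 : Fin b))]; ring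
      rw [this]; ring
    rw [e1, abs_of_nonneg (Finset.sum_nonneg (fun i _ => by linarith [hle i]))]
    calc ∑ i ∈ univ.erase (0:Fin b), (p i - (n i : ℝ) / M)
        ≤ ∑ i ∈ univ.erase (0:Fin b), (1:ℝ) / M :=
          Finset.sum_le_sum (fun i _ => by linarith [hge i])
    _ = ((b:ℝ) - 1) / M := by
          rw [Finset.sum_const, Finset.card_erase_of_mem (mem_univ _), Finset.card_univ,
            Fintype.card_fin, nsmul_eq_mul]
          have hb : 1 ≤ b := Nat.one_le_iff_ne_zero.mpr (NeZero.ne b)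
          rw [Nat.cast_sub hb]
          ring
  have hsum : ∑ i ∈ univ.erase (0:Fin b), (1:ℝ) / M = ((b:ℝ) - 1) / M := by
    rw [Finset.sum_const, Finset.card_erase_of_mem (mem_univ _), Finset.card_univ,
      Fintype.card_fin, nsmul_eq_mul]
    have hb : 1 ≤ b := Nat.one_le_iff_ne_zero.mpr (NeZero.ne b)
    rw [Nat.cast_sub hb]
    ring
  have := herase
  rw [hsum] at this
  have total := add_le_add h0 this
  refine le_trans total ?_
  rw [← add_div]
  apply le_of_eq
  ring
end RoundVec


lemma prod_lip {d b : ℕ} (p q : Fin d → Fin b → ℝ)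
    (hp : ∀ j, IsProbVec (p j)) (hq : ∀ j, IsProbVec (q j)) :
    ∑ A : Fin d → Fin b, |(∏ j, p j (A j)) - ∏ j, q j (A j)| ≤
      ∑ j, ∑ i, |p j i - q j i| := by
  classical
  -- hybrid
  set H : ℕ → (Fin d → Fin b) → ℝ :=
    fun t A => ∏ j : Fin d, (if (j : ℕ) < t then q j else p j) (A j) with hH
  have hH0 : ∀ A, H 0 A = ∏ j, p j (A j) := by
    intro A; apply Finset.prod_congr rfl; intro j _; simp
  have hHd : ∀ A, H d A = ∏ j, q j (A j) := by
    intro A; apply Finset.prod_congr rfl; intro j _; simp [j.isLt]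
  have step : ∀ t (ht : t < d),
      ∑ A : Fin d → Fin b, |H (t + 1) A - H t A| = ∑ i, |q ⟨t, ht⟩ i - p ⟨t, ht⟩ i| := by
    intro t ht
    set jt : Fin d := ⟨t, ht⟩ with hjt
    set g : Fin d → Fin b → ℝ :=
      fun j i => if j = jt then |q jt i - p jt i| else (if (j:ℕ) < t then q j i else p j i) with hg
    have habs : ∀ A : Fin d → Fin b, |H (t+1) A - H t A| = ∏ j, g j (A j) := by
      intro A
      have e1 : H (t+1) A = q jt (A jt) * ∏ j ∈ univ.erase jt, (if (j:ℕ) < t then q j else p j) (A j) := by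
        simp only [hH]
        rw [← Finset.mul_prod_erase univ _ (mem_univ jt)]
        congr 1
        · simp [hjt]
        · apply Finset.prod_congr rfl
          intro j hj
          have hne : j ≠ jt := Finset.ne_of_mem_erase hj
          have hnt : (j:ℕ) ≠ t := fun hc => hne (Fin.ext hc)
          have hiff : ((j:ℕ) < t + 1) ↔ ((j:ℕ) < t) := by omega
          simp only [hiff]
      have e2 : H t A = p jt (A jt) * ∏ j ∈ univ.erase jt, (if (j:ℕ) < t then q j else p j) (A j) := by
        simp only [hH]
        rw [← Finset.mul_prod_erase univ _ (mem_univ jt)]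
        congr 1
        simp [hjt]
      rw [e1, e2, ← sub_mul, abs_mul]
      have habs2 : |∏ j ∈ univ.erase jt, (if (j:ℕ) < t then q j else p j) (A j)|
          = ∏ j ∈ univ.erase jt, (if (j:ℕ) < t then q j else p j) (A j) := by
        apply abs_of_nonneg
        apply Finset.prod_nonneg
        intro j _
        split_ifs with h
        · exact (hq j).1 _
        · exact (hp j).1 _
      rw [habs2]
      rw [← Finset.mul_prod_erase univ (fun j => g j (A j)) (mem_univ jt)]
      congr 1
      · simp [hg]
      · apply Finset.prod_congr rfl
        intro j hj
        simp only [hg, if_neg (Finset.ne_of_mem_erase hj)]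
        split_ifs <;> rfl
    calc ∑ A : Fin d → Fin b, |H (t+1) A - H t A| = ∑ A : Fin d → Fin b, ∏ j, g j (A j) := by
          exact Finset.sum_congr rfl (fun A _ => habs A)
    _ = ∏ j, ∑ i, g j i := (Fintype.prod_sum _).symm
    _ = ∑ i, |q jt i - p jt i| := by
        rw [← Finset.mul_prod_erase univ _ (mem_univ jt)]
        have : ∏ j ∈ univ.erase jt, ∑ i, g j i = 1 := by
          apply Finset.prod_eq_one
          intro j hj
          have hne : j ≠ jt := Finset.ne_of_mem_erase hj
          simp only [hg, if_neg hne]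
          split_ifs with h
          · exact (hq j).2
          · exact (hp j).2
        rw [this, mul_one]
        apply Finset.sum_congr rfl
        intro i _
        simp [hg]
  calc ∑ A : Fin d → Fin b, |(∏ j, p j (A j)) - ∏ j, q j (A j)|
      = ∑ A : Fin d → Fin b, |H d A - H 0 A| := by
        apply Finset.sum_congr rfl
        intro A _
        rw [hH0, hHd, abs_sub_comm]
    _ = ∑ A : Fin d → Fin b, |∑ t ∈ range d, (H (t+1) A - H t A)| := by
        apply Finset.sum_congr rfl
        intro A _
        rw [Finset.sum_range_sub (fun t => H t A)]
    _ ≤ ∑ A : Fin d → Fin b, ∑ t ∈ range d, |H (t+1) A - H t A| := by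
        apply Finset.sum_le_sum
        intro A _
        exact Finset.abs_sum_le_sum_abs _ _
    _ = ∑ t ∈ range d, ∑ A : Fin d → Fin b, |H (t+1) A - H t A| := Finset.sum_comm
    _ ≤ ∑ j, ∑ i, |p j i - q j i| := by
        rw [← Fin.sum_univ_eq_sum_range (fun t => ∑ A : Fin d → Fin b, |H (t+1) A - H t A|) d]
        apply Finset.sum_le_sum
        intro j _
        rw [step j j.isLt]
        apply le_of_eq
        apply Finset.sum_congr rfl
        intro i _
        simp only [Fin.eta]
        rw [abs_sub_comm]

lemma tensor_close {d b k : ℕ} (w w' : Fin k → ℝ) (p p' : Fin k → Fin d → Fin b → ℝ)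
    (hw : IsProbVec w) (hw' : IsProbVec w')
    (hp : ∀ i j, IsProbVec (p i j)) (hp' : ∀ i j, IsProbVec (p' i j))
    (D : ℝ) (hD0 : 0 ≤ D)
    (hD : ∀ i, ∑ j, ∑ a, |p i j a - p' i j a| ≤ D) :
    ∑ A : Fin d → Fin b, |(∑ i, w i * ∏ j, p i j (A j)) - ∑ i, w' i * ∏ j, p' i j (A j)|
      ≤ (∑ i, |w i - w' i|) + D := by
  classical
  have sumprod : ∀ i, ∑ A : Fin d → Fin b, ∏ j, p' i j (A j) = 1 := by
    intro i
    rw [← Fintype.prod_sum (fun j a => p' i j a)]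
    exact Finset.prod_eq_one (fun j _ => (hp' i j).2)
  calc ∑ A : Fin d → Fin b, |(∑ i, w i * ∏ j, p i j (A j)) - ∑ i, w' i * ∏ j, p' i j (A j)|
      = ∑ A : Fin d → Fin b, |∑ i, (w i * ∏ j, p i j (A j) - w' i * ∏ j, p' i j (A j))| := by
        apply Finset.sum_congr rfl; intro A _; rw [Finset.sum_sub_distrib]
    _ ≤ ∑ A : Fin d → Fin b, ∑ i, |w i * ∏ j, p i j (A j) - w' i * ∏ j, p' i j (A j)| :=
        Finset.sum_le_sum (fun A _ => Finset.abs_sum_le_sum_abs _ _)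
    _ = ∑ i, ∑ A : Fin d → Fin b, |w i * ∏ j, p i j (A j) - w' i * ∏ j, p' i j (A j)| :=
        Finset.sum_comm
    _ ≤ ∑ i, ∑ A : Fin d → Fin b,
          (|w i - w' i| * ∏ j, p' i j (A j) + w i * |(∏ j, p i j (A j)) - ∏ j, p' i j (A j)|) := by
        apply Finset.sum_le_sum; intro i _
        apply Finset.sum_le_sum; intro A _
        have hprod' : (0:ℝ) ≤ ∏ j, p' i j (A j) :=
          Finset.prod_nonneg (fun j _ => (hp' i j).1 _)
        have key : w i * ∏ j, p i j (A j) - w' i * ∏ j, p' i j (A j)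
            = (w i - w' i) * (∏ j, p' i j (A j))
              + w i * ((∏ j, p i j (A j)) - ∏ j, p' i j (A j)) := by ring
        rw [key]
        calc |(w i - w' i) * (∏ j, p' i j (A j))
              + w i * ((∏ j, p i j (A j)) - ∏ j, p' i j (A j))|
            ≤ |(w i - w' i) * ∏ j, p' i j (A j)|
              + |w i * ((∏ j, p i j (A j)) - ∏ j, p' i j (A j))| := abs_add_le _ _
          _ = |w i - w' i| * (∏ j, p' i j (A j))
              + w i * |(∏ j, p i j (A j)) - ∏ j, p' i j (A j)| := by
              rw [abs_mul, abs_mul, abs_of_nonneg hprod', abs_of_nonneg (hw.1 i)]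
    _ = ∑ i, (|w i - w' i| * ∑ A : Fin d → Fin b, ∏ j, p' i j (A j)
          + w i * ∑ A : Fin d → Fin b, |(∏ j, p i j (A j)) - ∏ j, p' i j (A j)|) := by
        apply Finset.sum_congr rfl; intro i _
        rw [Finset.sum_add_distrib, ← Finset.mul_sum, ← Finset.mul_sum]
    _ ≤ ∑ i, (|w i - w' i| * 1 + w i * D) := by
        apply Finset.sum_le_sum; intro i _
        apply add_le_add
        · rw [sumprod i]
        · apply mul_le_mul_of_nonneg_left _ (hw.1 i)
          exact le_trans (prod_lip (p i) (p' i) (hp i) (hp' i)) (hD i)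
    _ = (∑ i, |w i - w' i|) + D := by
        rw [Finset.sum_add_distrib, ← Finset.sum_mul, ← Finset.sum_mul, hw.2]
        ring

theorem multiview_tensor_cover (d b k : ℕ) (hd : 0 < d) (hb : 0 < b) (hk : 0 < k)
    (ε : ℝ) (hε : 0 < ε) (hε1 : ε ≤ 1) :
    ∃ S : Finset ((Fin d → Fin b) → ℝ),
      (∀ T ∈ S, T ∈ MultiViewTensors d b k) ∧
      (S.card : ℝ) ≤ (4 * b * d / ε) ^ (b * d * k) * (4 * k / ε) ^ k ∧
      ∀ T ∈ MultiViewTensors d b k, ∃ T' ∈ S, ∑ A, |T A - T' A| ≤ ε := by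
  classical
  haveI : NeZero b := ⟨hb.ne'⟩
  haveI : NeZero k := ⟨hk.ne'⟩
  have hbR : (1:ℝ) ≤ b := by exact_mod_cast hb
  have hdR : (1:ℝ) ≤ d := by exact_mod_cast hd
  have hkR : (1:ℝ) ≤ k := by exact_mod_cast hk
  set Mp := ⌊4 * (b:ℝ) * d / ε⌋₊ with hMpdef
  set Mw := ⌊4 * (k:ℝ) / ε⌋₊ with hMwdef
  have hxp : (1:ℝ) ≤ 4 * (b:ℝ) * d / ε := by
    rw [le_div_iff₀ hε]; nlinarith
  have hxw : (1:ℝ) ≤ 4 * (k:ℝ) / ε := by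
    rw [le_div_iff₀ hε]; nlinarith
  have hMp : 0 < Mp := Nat.floor_pos.mpr hxp
  have hMw : 0 < Mw := Nat.floor_pos.mpr hxw
  have hMpR : (0:ℝ) < Mp := by exact_mod_cast hMp
  have hMwR : (0:ℝ) < Mw := by exact_mod_cast hMw
  set Φ : ((Fin k → Fin Mw) × (Fin k → Fin d → Fin b → Fin Mp)) → ((Fin d → Fin b) → ℝ) :=
    fun x => fun A => ∑ i, gridVec Mw x.1 i * ∏ j, gridVec Mp (x.2 i j) (A j) with hΦ
  refine ⟨Finset.image Φ Finset.univ, ?_, ?_, ?_⟩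
  · intro T hT
    obtain ⟨x, _, rfl⟩ := Finset.mem_image.mp hT
    exact ⟨gridVec Mw x.1, gridVec_isProbVec _ _,
      fun i j => gridVec Mp (x.2 i j), fun i j => gridVec_isProbVec _ _, rfl⟩
  · calc ((Finset.image Φ Finset.univ).card : ℝ)
        ≤ ((Finset.univ : Finset ((Fin k → Fin Mw) × (Fin k → Fin d → Fin b → Fin Mp))).card : ℝ) := by
          exact_mod_cast Finset.card_image_le
      _ = ((Mw ^ k * Mp ^ (b * d * k) : ℕ) : ℝ) := by
          rw [Finset.card_univ]
          congr 1
          rw [Fintype.card_prod, Fintype.card_fun, Fintype.card_fun, Fintype.card_fin,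
            Fintype.card_fin]
          congr 1
          rw [Fintype.card_fun, Fintype.card_fun, Fintype.card_fin, Fintype.card_fin,
            Fintype.card_fin, ← pow_mul, ← pow_mul]
          ring_nf
      _ ≤ (4 * b * d / ε) ^ (b * d * k) * (4 * k / ε) ^ k := by
          push_cast
          rw [mul_comm]
          apply mul_le_mul
          · apply pow_le_pow_left₀ (by positivity)
            exact Nat.floor_le (by positivity)
          · apply pow_le_pow_left₀ (by positivity)
            exact Nat.floor_le (by positivity)
          · positivity
          · positivity
  · intro T hT
    obtain ⟨w, hw, p, hp, rfl⟩ := hT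
    set x : (Fin k → Fin Mw) × (Fin k → Fin d → Fin b → Fin Mp) :=
      (roundIdx Mw hMw w, fun i j => roundIdx Mp hMp (p i j)) with hx
    refine ⟨Φ x, Finset.mem_image.mpr ⟨x, Finset.mem_univ x, rfl⟩, ?_⟩
    have hclosew : ∑ i, |w i - gridVec Mw x.1 i| ≤ 2 * ((k:ℝ) - 1) / Mw := by
      calc ∑ i, |w i - gridVec Mw x.1 i| = ∑ i, |gridVec Mw x.1 i - w i| :=
            Finset.sum_congr rfl (fun i _ => abs_sub_comm _ _)
        _ ≤ 2 * ((k:ℝ) - 1) / Mw := roundIdx_close Mw hMw w hw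
    have hclosep : ∀ i, ∑ j, ∑ a, |p i j a - gridVec Mp (x.2 i j) a|
        ≤ (d:ℝ) * (2 * ((b:ℝ) - 1) / Mp) := by
      intro i
      calc ∑ j, ∑ a, |p i j a - gridVec Mp (x.2 i j) a|
          ≤ ∑ _j : Fin d, 2 * ((b:ℝ) - 1) / Mp := by
            apply Finset.sum_le_sum
            intro j _
            calc ∑ a, |p i j a - gridVec Mp (x.2 i j) a|
                = ∑ a, |gridVec Mp (x.2 i j) a - p i j a| :=
                  Finset.sum_congr rfl (fun a _ => abs_sub_comm _ _)
              _ ≤ 2 * ((b:ℝ) - 1) / Mp := roundIdx_close Mp hMp (p i j) (hp i j)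
        _ = (d:ℝ) * (2 * ((b:ℝ) - 1) / Mp) := by
            rw [Finset.sum_const, Finset.card_univ, Fintype.card_fin, nsmul_eq_mul]
    have hDnn : (0:ℝ) ≤ (d:ℝ) * (2 * ((b:ℝ) - 1) / Mp) := by
      apply mul_nonneg (by positivity)
      apply div_nonneg _ hMpR.le
      nlinarith
    have key := tensor_close w (gridVec Mw x.1) p (fun i j => gridVec Mp (x.2 i j)) hw
      (gridVec_isProbVec _ _) hp (fun i j => gridVec_isProbVec _ _)
      ((d:ℝ) * (2 * ((b:ℝ) - 1) / Mp)) hDnn hclosep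
    refine le_trans key ?_
    have hnum1 : 2 * ((k:ℝ) - 1) / Mw ≤ ε / 2 := by
      rw [div_le_div_iff₀ hMwR (by norm_num)]
      have hfl : 4 * (k:ℝ) / ε - 1 < Mw := Nat.sub_one_lt_floor _
      rw [div_sub' hε.ne', div_lt_iff₀ hε] at hfl
      nlinarith
    have hnum2 : (d:ℝ) * (2 * ((b:ℝ) - 1) / Mp) ≤ ε / 2 := by
      rw [mul_div_assoc']
      rw [div_le_div_iff₀ hMpR (by norm_num)]
      have hfl : 4 * (b:ℝ) * d / ε - 1 < Mp := Nat.sub_one_lt_floor _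
      rw [div_sub' hε.ne', div_lt_iff₀ hε] at hfl
      nlinarith
    calc (∑ i, |w i - gridVec Mw x.1 i|) + (d:ℝ) * (2 * ((b:ℝ) - 1) / Mp)
        ≤ 2 * ((k:ℝ) - 1) / Mw + ε / 2 := add_le_add hclosew hnum2
      _ ≤ ε / 2 + ε / 2 := add_le_add hnum1 le_rfl
      _ = ε := by ring
end

section
/- For all 0 < ε ≤ 1, the set T̃^k_{d,b} of probability tensors given by a nonnegative Tucker decomposition with core in T_{d,k} and factor vectors in Δ_b admits an ε-cover in ℓ¹-norm of cardinality at most (4bd/ε)^{bdk} · (4k^d/ε)^{k^d}. -/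
open Finset

/-- `W` is a probability tensor: nonnegative entries summing to 1. -/
def IsProbTensor {d k : ℕ} (W : (Fin d → Fin k) → ℝ) : Prop :=
  (∀ S, 0 ≤ W S) ∧ ∑ S, W S = 1

/-- Tucker probability tensors: nonnegative Tucker decompositions with core in `T_{d,k}`
and factor vectors in `Δ_b`. -/
def TuckerTensors (d b k : ℕ) : Set ((Fin d → Fin b) → ℝ) :=
  {T | ∃ W : (Fin d → Fin k) → ℝ, IsProbTensor W ∧ ∃ p : Fin d → Fin k → Fin b → ℝ,
    (∀ i j, IsProbVec (p i j)) ∧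
    T = fun A => ∑ S : Fin d → Fin k, W S * ∏ i, p i (S i) (A i)}

lemma simplex_round {ι : Type*} [Fintype ι] [DecidableEq ι] (N : ℕ) (hN : 0 < N)
    (p : ι → ℝ) (hp : ∀ i, 0 ≤ p i) (hs : ∑ i, p i = 1) :
    ∃ n : ι → ℕ, (∀ i, n i ≤ N) ∧ (∑ i, n i = N) ∧
      ∑ i, |p i - (n i : ℝ)/N| ≤ 2*((Fintype.card ι : ℝ) - 1)/N := by
  have hNR : (0:ℝ) < N := by exact_mod_cast hN
  have hne : Nonempty ι := by
    by_contra h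
    haveI : IsEmpty ι := not_nonempty_iff.mp h
    rw [Finset.univ_eq_empty, Finset.sum_empty] at hs
    norm_num at hs
  have hcard : 0 < Fintype.card ι := Fintype.card_pos
  set f : ι → ℕ := fun i => ⌊(N:ℝ) * p i⌋₊ with hf
  have hfle : ∀ i, (f i : ℝ) ≤ N * p i := fun i => Nat.floor_le (mul_nonneg (Nat.cast_nonneg N) (hp i))
  have hflt : ∀ i, (N:ℝ) * p i < f i + 1 := fun i => Nat.lt_floor_add_one _
  have hsum : ∑ i, (N:ℝ) * p i = N := by rw [← Finset.mul_sum, hs, mul_one]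
  have hfsum_le : ∑ i, f i ≤ N := by
    have : ((∑ i, f i : ℕ) : ℝ) ≤ N := by
      push_cast
      calc ∑ i, (f i : ℝ) ≤ ∑ i, (N:ℝ) * p i := Finset.sum_le_sum fun i _ => hfle i
        _ = N := hsum
    exact_mod_cast this
  have hfsum_gt : N < ∑ i, f i + Fintype.card ι := by
    have h1 : (N:ℝ) < ∑ i, ((f i : ℝ) + 1) := by
      rw [← hsum]; exact Finset.sum_lt_sum_of_nonempty Finset.univ_nonempty fun i _ => hflt i
    have h2 : (N:ℝ) < (∑ i, f i : ℕ) + Fintype.card ι := by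
      push_cast; simpa [Finset.sum_add_distrib, Finset.card_univ] using h1
    exact_mod_cast h2
  set r : ℕ := N - ∑ i, f i with hr
  have hrlt : r ≤ Fintype.card ι - 1 := by omega
  obtain ⟨t, -, htcard⟩ := Finset.exists_subset_card_eq
    (show r ≤ (Finset.univ : Finset ι).card by rw [Finset.card_univ]; omega)
  refine ⟨fun i => f i + (if i ∈ t then 1 else 0), ?_, ?_, ?_⟩
  · intro i
    by_cases hit : i ∈ t
    · simp only [hit, if_true]
      have ht0 : 0 < r := by
        rcases Nat.eq_zero_or_pos r with h0 | h0
        · rw [h0] at htcard; simp [Finset.card_eq_zero] at htcard; simp [htcard] at hit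
        · exact h0
      have : f i ≤ ∑ j, f j := Finset.single_le_sum (fun j _ => Nat.zero_le _) (Finset.mem_univ i)
      omega
    · simp only [hit, if_false]
      have hpi1 : p i ≤ 1 := by
        rw [← hs]
        exact Finset.single_le_sum (fun j _ => hp j) (Finset.mem_univ i)
      have : (f i : ℝ) ≤ N := le_trans (hfle i) (by nlinarith)
      exact_mod_cast this
  · rw [Finset.sum_add_distrib, Finset.sum_ite_mem, Finset.univ_inter,
      Finset.sum_const, htcard, smul_eq_mul, mul_one]
    omega
  · have key : ∀ i, |p i - ((f i + (if i ∈ t then 1 else 0) : ℕ) : ℝ)/N| ≤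
        (p i - (f i : ℝ)/N) + (if i ∈ t then 1 else 0)/N := by
      intro i
      have h1 : 0 ≤ p i - (f i : ℝ)/N := by
        rw [sub_nonneg, div_le_iff₀ hNR]; linarith [hfle i]
      have h2 : (0:ℝ) ≤ (if i ∈ t then (1:ℝ) else 0)/N := by split_ifs <;> positivity
      push_cast
      rw [add_div]
      calc |p i - ((f i:ℝ)/N + (if i ∈ t then (1:ℝ) else 0)/N)|
          = |(p i - (f i:ℝ)/N) - (if i ∈ t then (1:ℝ) else 0)/N| := by ring_nf
        _ ≤ |p i - (f i:ℝ)/N| + |(if i ∈ t then (1:ℝ) else 0)/N| := abs_sub _ _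
        _ = (p i - (f i : ℝ)/N) + (if i ∈ t then (1:ℝ) else 0)/N := by
            rw [abs_of_nonneg h1, abs_of_nonneg h2]
    have hrR : (r:ℝ) ≤ (Fintype.card ι:ℝ) - 1 := by
      have h3 : ((r:ℕ):ℝ) ≤ ((Fintype.card ι - 1 : ℕ):ℝ) := by exact_mod_cast hrlt
      rwa [Nat.cast_sub hcard, Nat.cast_one] at h3
    calc ∑ i, |p i - ((f i + (if i ∈ t then 1 else 0) : ℕ) : ℝ)/N|
        ≤ ∑ i, ((p i - (f i : ℝ)/N) + (if i ∈ t then 1 else 0)/N) :=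
          Finset.sum_le_sum fun i _ => key i
      _ = (1 - (∑ i, (f i:ℕ))/N) + r/N := by
          push_cast
          rw [Finset.sum_add_distrib, Finset.sum_sub_distrib, hs, ← Finset.sum_div,
            ← Finset.sum_div, Finset.sum_ite_mem, Finset.univ_inter, Finset.sum_const,
            htcard]
          push_cast
          ring
      _ = 2 * r / N := by
          have h4 : ((r:ℕ):ℝ) = (N:ℝ) - (∑ i, f i : ℕ) := by
            rw [hr]; push_cast [Nat.cast_sub hfsum_le]; ring
          rw [h4]; field_simp; ring
      _ ≤ 2*((Fintype.card ι : ℝ) - 1)/N := by gcongr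

lemma sum_prod_eq {d b : ℕ} (f : Fin d → Fin b → ℝ) :
    ∑ A : Fin d → Fin b, ∏ i, f i (A i) = ∏ i, ∑ a, f i a := by
  rw [Finset.prod_univ_sum]
  simp [Fintype.piFinset_univ]

lemma sum_prod_abs_one {d b : ℕ} (f : Fin d → Fin b → ℝ)
    (hf : ∀ i, IsProbVec (f i)) :
    ∑ A : Fin d → Fin b, ∏ i, |f i (A i)| = 1 := by
  rw [sum_prod_eq (fun i a => |f i a|)]
  rw [Finset.prod_eq_one]
  intro i _
  calc ∑ a, |f i a| = ∑ a, f i a :=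
        Finset.sum_congr rfl fun a _ => abs_of_nonneg ((hf i).1 a)
    _ = 1 := (hf i).2

lemma prod_telescope_l1 {d b : ℕ} (u v : Fin d → Fin b → ℝ)
    (hu : ∀ i, IsProbVec (u i)) (hv : ∀ i, IsProbVec (v i))
    (εp : ℝ) (hεp : 0 ≤ εp) (huv : ∀ i, ∑ a, |u i a - v i a| ≤ εp) :
    ∑ A : Fin d → Fin b, |(∏ i, u i (A i)) - ∏ i, v i (A i)| ≤ d * εp := by
  set G : ℕ → (Fin d → Fin b) → ℝ :=
    fun t A => ∏ i : Fin d, (if (i:ℕ) < t then v i else u i) (A i) with hG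
  have hG0 : ∀ A, G 0 A = ∏ i, u i (A i) := by
    intro A; simp [hG]
  have hGd : ∀ A, G d A = ∏ i, v i (A i) := by
    intro A; simp only [hG]
    exact Finset.prod_congr rfl fun i _ => by simp [i.isLt]
  have step : ∀ t, t < d → ∑ A, |G (t+1) A - G t A| ≤ εp := by
    intro t ht
    set t' : Fin d := ⟨t, ht⟩ with ht'
    set F : Fin d → Fin b → ℝ := fun i => if (i:ℕ) < t then v i else u i with hF
    set h : Fin d → Fin b → ℝ :=
      fun i a => if i = t' then |v t' a - u t' a| else |F i a| with hh
    have hFF' : ∀ i : Fin d, i ≠ t' → (if (i:ℕ) < t + 1 then v i else u i) = F i := by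
      intro i hi
      have hvne : (i:ℕ) ≠ t := fun hc => hi (Fin.ext hc)
      simp only [hF]
      by_cases hlt : (i:ℕ) < t
      · simp [hlt, Nat.lt_succ_of_lt hlt]
      · have h2 : ¬ ((i:ℕ) < t + 1) := by omega
        simp [hlt, h2]
    have key : ∀ A, |G (t+1) A - G t A| = ∏ i, h i (A i) := by
      intro A
      have e1 : G (t+1) A =
          (if ((t':Fin d):ℕ) < t + 1 then v t' else u t') (A t') *
            ∏ i ∈ Finset.univ.erase t', (if (i:ℕ) < t + 1 then v i else u i) (A i) := by
        simp only [hG]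
        rw [← Finset.mul_prod_erase Finset.univ _ (Finset.mem_univ t')]
      have e2 : G t A = F t' (A t') * ∏ i ∈ Finset.univ.erase t', F i (A i) := by
        simp only [hG, ← hF]
        rw [← Finset.mul_prod_erase Finset.univ _ (Finset.mem_univ t')]
      have e3 : ∏ i ∈ Finset.univ.erase t', (if (i:ℕ) < t + 1 then v i else u i) (A i)
          = ∏ i ∈ Finset.univ.erase t', F i (A i) :=
        Finset.prod_congr rfl fun i hi => by
          rw [hFF' i (Finset.ne_of_mem_erase hi)]
      have e4 : (if ((t':Fin d):ℕ) < t + 1 then v t' else u t') = v t' := by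
        simp [ht']
      have e5 : F t' = u t' := by simp [hF, ht']
      rw [e1, e2, e3, e4, e5, ← sub_mul, abs_mul, Finset.abs_prod]
      rw [← Finset.mul_prod_erase Finset.univ (fun i => h i (A i)) (Finset.mem_univ t')]
      congr 1
      · simp [hh]
      · exact Finset.prod_congr rfl fun i hi => by
          simp [hh, Finset.ne_of_mem_erase hi]
    calc ∑ A, |G (t+1) A - G t A| = ∑ A : Fin d → Fin b, ∏ i, h i (A i) :=
          Finset.sum_congr rfl fun A _ => key A
      _ = ∏ i, ∑ a, h i a := sum_prod_eq h
      _ = (∑ a, h t' a) * ∏ i ∈ Finset.univ.erase t', ∑ a, h i a := by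
          rw [← Finset.mul_prod_erase Finset.univ _ (Finset.mem_univ t')]
      _ = (∑ a, |v t' a - u t' a|) * 1 := by
          congr 1
          · exact Finset.sum_congr rfl fun a _ => by simp [hh]
          · rw [Finset.prod_eq_one]
            intro i hi
            have hne := Finset.ne_of_mem_erase hi
            have h1 : ∀ a, h i a = |F i a| := fun a => by simp [hh, hne]
            simp only [h1]
            have h2 : IsProbVec (F i) := by
              simp only [hF]; split_ifs; exacts [hv i, hu i]
            calc ∑ a, |F i a| = ∑ a, F i a :=
                  Finset.sum_congr rfl fun a _ => abs_of_nonneg (h2.1 a)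
              _ = 1 := h2.2
      _ ≤ εp := by
          rw [mul_one]
          calc ∑ a, |v t' a - u t' a| = ∑ a, |u t' a - v t' a| :=
                Finset.sum_congr rfl fun a _ => abs_sub_comm _ _
            _ ≤ εp := huv t'
  calc ∑ A : Fin d → Fin b, |(∏ i, u i (A i)) - ∏ i, v i (A i)|
      = ∑ A : Fin d → Fin b, |∑ t ∈ Finset.range d, (G (t+1) A - G t A)| := by
        refine Finset.sum_congr rfl fun A _ => ?_
        rw [Finset.sum_range_sub (fun t => G t A), hG0, hGd, abs_sub_comm]
    _ ≤ ∑ A : Fin d → Fin b, ∑ t ∈ Finset.range d, |G (t+1) A - G t A| :=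
        Finset.sum_le_sum fun A _ => Finset.abs_sum_le_sum_abs _ _
    _ = ∑ t ∈ Finset.range d, ∑ A, |G (t+1) A - G t A| := Finset.sum_comm
    _ ≤ ∑ t ∈ Finset.range d, εp :=
        Finset.sum_le_sum fun t ht => step t (Finset.mem_range.mp ht)
    _ = d * εp := by rw [Finset.sum_const, Finset.card_range, nsmul_eq_mul]

lemma tucker_l1 {d b k : ℕ} (W W' : (Fin d → Fin k) → ℝ)
    (p p' : Fin d → Fin k → Fin b → ℝ)
    (hW' : IsProbTensor W') (hp : ∀ i j, IsProbVec (p i j)) (hp' : ∀ i j, IsProbVec (p' i j))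
    (εW εp : ℝ) (hεp : 0 ≤ εp) (hWd : ∑ S, |W S - W' S| ≤ εW)
    (hpd : ∀ i j, ∑ a, |p i j a - p' i j a| ≤ εp) :
    ∑ A : Fin d → Fin b, |(∑ S : Fin d → Fin k, W S * ∏ i, p i (S i) (A i)) -
      (∑ S : Fin d → Fin k, W' S * ∏ i, p' i (S i) (A i))| ≤ εW + d * εp := by
  have main : ∀ A : Fin d → Fin b,
      |(∑ S : Fin d → Fin k, W S * ∏ i, p i (S i) (A i)) -
        (∑ S : Fin d → Fin k, W' S * ∏ i, p' i (S i) (A i))| ≤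
      (∑ S : Fin d → Fin k, |W S - W' S| * ∏ i, |p i (S i) (A i)|) +
      (∑ S : Fin d → Fin k, W' S * |(∏ i, p i (S i) (A i)) - ∏ i, p' i (S i) (A i)|) := by
    intro A
    have e : (∑ S : Fin d → Fin k, W S * ∏ i, p i (S i) (A i)) -
        (∑ S : Fin d → Fin k, W' S * ∏ i, p' i (S i) (A i)) =
        (∑ S : Fin d → Fin k, (W S - W' S) * ∏ i, p i (S i) (A i)) +
        (∑ S : Fin d → Fin k, W' S * ((∏ i, p i (S i) (A i)) - ∏ i, p' i (S i) (A i))) := by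
      rw [← Finset.sum_add_distrib, ← Finset.sum_sub_distrib]
      exact Finset.sum_congr rfl fun S _ => by ring
    rw [e]
    refine le_trans (abs_add_le _ _) (add_le_add ?_ ?_)
    · calc |∑ S : Fin d → Fin k, (W S - W' S) * ∏ i, p i (S i) (A i)|
          ≤ ∑ S : Fin d → Fin k, |(W S - W' S) * ∏ i, p i (S i) (A i)| :=
            Finset.abs_sum_le_sum_abs _ _
        _ = ∑ S : Fin d → Fin k, |W S - W' S| * ∏ i, |p i (S i) (A i)| :=
            Finset.sum_congr rfl fun S _ => by rw [abs_mul, Finset.abs_prod]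
    · calc |∑ S : Fin d → Fin k, W' S * ((∏ i, p i (S i) (A i)) - ∏ i, p' i (S i) (A i))|
          ≤ ∑ S : Fin d → Fin k, |W' S * ((∏ i, p i (S i) (A i)) - ∏ i, p' i (S i) (A i))| :=
            Finset.abs_sum_le_sum_abs _ _
        _ = ∑ S : Fin d → Fin k, W' S * |(∏ i, p i (S i) (A i)) - ∏ i, p' i (S i) (A i)| :=
            Finset.sum_congr rfl fun S _ => by rw [abs_mul, abs_of_nonneg (hW'.1 S)]
  calc ∑ A : Fin d → Fin b, |(∑ S : Fin d → Fin k, W S * ∏ i, p i (S i) (A i)) -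
        (∑ S : Fin d → Fin k, W' S * ∏ i, p' i (S i) (A i))|
      ≤ ∑ A : Fin d → Fin b,
        ((∑ S : Fin d → Fin k, |W S - W' S| * ∏ i, |p i (S i) (A i)|) +
         (∑ S : Fin d → Fin k, W' S * |(∏ i, p i (S i) (A i)) - ∏ i, p' i (S i) (A i)|)) :=
        Finset.sum_le_sum fun A _ => main A
    _ = (∑ S : Fin d → Fin k, |W S - W' S| * ∑ A : Fin d → Fin b, ∏ i, |p i (S i) (A i)|) +
        (∑ S : Fin d → Fin k, W' S *
          ∑ A : Fin d → Fin b, |(∏ i, p i (S i) (A i)) - ∏ i, p' i (S i) (A i)|) := by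
        rw [Finset.sum_add_distrib]
        congr 1
        · rw [Finset.sum_comm]
          refine Finset.sum_congr rfl fun S _ => ?_
          rw [Finset.mul_sum]
        · rw [Finset.sum_comm]
          refine Finset.sum_congr rfl fun S _ => ?_
          rw [Finset.mul_sum]
    _ ≤ (∑ S : Fin d → Fin k, |W S - W' S| * 1) +
        (∑ S : Fin d → Fin k, W' S * (d * εp)) := by
        refine add_le_add (Finset.sum_le_sum fun S _ => ?_) (Finset.sum_le_sum fun S _ => ?_)
        · exact mul_le_mul_of_nonneg_left
            (le_of_eq (sum_prod_abs_one (fun i => p i (S i)) fun i => hp i (S i)))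
            (abs_nonneg _)
        · exact mul_le_mul_of_nonneg_left
            (prod_telescope_l1 _ _ (fun i => hp i (S i)) (fun i => hp' i (S i)) εp hεp
              (fun i => hpd i (S i)))
            (hW'.1 S)
    _ = (∑ S, |W S - W' S|) + (↑d * εp) := by
        congr 1
        · exact Finset.sum_congr rfl fun S _ => mul_one _
        · rw [← Finset.sum_mul, hW'.2, one_mul]
    _ ≤ εW + d * εp := by linarith


set_option maxHeartbeats 2000000 in
theorem tucker_tensor_cover (d b k : ℕ) (hd : 0 < d) (hb : 0 < b) (hk : 0 < k)
    (ε : ℝ) (hε : 0 < ε) (hε1 : ε ≤ 1) :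
    ∃ S : Finset ((Fin d → Fin b) → ℝ),
      (∀ T ∈ S, T ∈ TuckerTensors d b k) ∧
      (S.card : ℝ) ≤ (4 * b * d / ε) ^ (b * d * k) * (4 * k ^ d / ε) ^ (k ^ d) ∧
      ∀ T ∈ TuckerTensors d b k, ∃ T' ∈ S, ∑ A, |T A - T' A| ≤ ε := by
  classical
  set NW := max 1 ⌈4*((k:ℝ)^d - 1)/ε⌉₊ with hNWdef
  set Np := max 1 ⌈4*(d:ℝ)*((b:ℝ) - 1)/ε⌉₊ with hNpdef
  have hNWpos : 0 < NW := lt_of_lt_of_le one_pos (le_max_left _ _)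
  have hNppos : 0 < Np := lt_of_lt_of_le one_pos (le_max_left _ _)
  have hNWR : (0:ℝ) < NW := by exact_mod_cast hNWpos
  have hNpR : (0:ℝ) < Np := by exact_mod_cast hNppos
  have hdR : (1:ℝ) ≤ d := by exact_mod_cast hd
  have hbR : (1:ℝ) ≤ b := by exact_mod_cast hb
  have hkd : (1:ℝ) ≤ (k:ℝ)^d := one_le_pow₀ (by exact_mod_cast hk)
  have hx0 : 0 ≤ 4*((k:ℝ)^d - 1)/ε := by apply div_nonneg _ hε.le; linarith
  have hy0 : 0 ≤ 4*(d:ℝ)*((b:ℝ) - 1)/ε := by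
    apply div_nonneg _ hε.le; nlinarith
  have hNW2 : 4*((k:ℝ)^d - 1)/ε ≤ (NW:ℝ) := by
    calc 4*((k:ℝ)^d - 1)/ε ≤ (⌈4*((k:ℝ)^d - 1)/ε⌉₊ : ℝ) := Nat.le_ceil _
      _ ≤ (NW:ℝ) := by exact Nat.cast_le.mpr (le_max_right 1 _)
  have hNp2 : 4*(d:ℝ)*((b:ℝ) - 1)/ε ≤ (Np:ℝ) := by
    calc 4*(d:ℝ)*((b:ℝ) - 1)/ε ≤ (⌈4*(d:ℝ)*((b:ℝ) - 1)/ε⌉₊ : ℝ) := Nat.le_ceil _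
      _ ≤ (Np:ℝ) := by exact Nat.cast_le.mpr (le_max_right 1 _)
  have hNW1 : (NW:ℝ) + 1 ≤ 4*(k:ℝ)^d/ε := by
    have hceil : (⌈4*((k:ℝ)^d - 1)/ε⌉₊ : ℝ) < 4*((k:ℝ)^d - 1)/ε + 1 :=
      Nat.ceil_lt_add_one hx0
    have hmax : (NW:ℝ) ≤ max 1 (4*((k:ℝ)^d - 1)/ε + 1) := by
      rw [hNWdef]; push_cast [Nat.cast_max]; exact max_le_max le_rfl hceil.le
    have hNWle : (NW:ℝ) ≤ 4*((k:ℝ)^d - 1)/ε + 1 := by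
      rw [max_eq_right (by linarith)] at hmax; exact hmax
    have key : 4*(k:ℝ)^d/ε - (4*((k:ℝ)^d - 1)/ε + 2) = 4/ε - 2 := by
      field_simp; ring
    have h4 : (2:ℝ) ≤ 4/ε := by rw [le_div_iff₀ hε]; linarith
    nlinarith [hNWle]
  have hNp1 : (Np:ℝ) + 1 ≤ 4*(b:ℝ)*(d:ℝ)/ε := by
    have hceil : (⌈4*(d:ℝ)*((b:ℝ) - 1)/ε⌉₊ : ℝ) < 4*(d:ℝ)*((b:ℝ) - 1)/ε + 1 :=
      Nat.ceil_lt_add_one hy0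
    have hmax : (Np:ℝ) ≤ max 1 (4*(d:ℝ)*((b:ℝ) - 1)/ε + 1) := by
      rw [hNpdef]; push_cast [Nat.cast_max]; exact max_le_max le_rfl hceil.le
    have hNple : (Np:ℝ) ≤ 4*(d:ℝ)*((b:ℝ) - 1)/ε + 1 := by
      rw [max_eq_right (by linarith)] at hmax; exact hmax
    have key : 4*(b:ℝ)*(d:ℝ)/ε - (4*(d:ℝ)*((b:ℝ) - 1)/ε + 2) = 4*(d:ℝ)/ε - 2 := by
      field_simp; ring
    have h4 : (2:ℝ) ≤ 4*(d:ℝ)/ε := by rw [le_div_iff₀ hε]; nlinarith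
    nlinarith [hNple]
  -- error radii
  have hradW : 2*((k:ℝ)^d - 1)/NW ≤ ε/2 := by
    rw [div_le_div_iff₀ hNWR (by norm_num : (0:ℝ) < 2)]
    have h1 : ε * (4*((k:ℝ)^d - 1)/ε) ≤ ε * NW := by
      exact mul_le_mul_of_nonneg_left hNW2 hε.le
    rw [mul_div_cancel₀ _ hε.ne'] at h1
    nlinarith
  have hradp : 2*((b:ℝ) - 1)/Np ≤ ε/(2*d) := by
    rw [div_le_div_iff₀ hNpR (by positivity : (0:ℝ) < 2*d)]
    have h1 : ε * (4*(d:ℝ)*((b:ℝ) - 1)/ε) ≤ ε * Np := by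
      exact mul_le_mul_of_nonneg_left hNp2 hε.le
    rw [mul_div_cancel₀ _ hε.ne'] at h1
    nlinarith
  refine ⟨Finset.image
      (fun q : (((Fin d → Fin k) → Fin (NW+1)) × (Fin d → Fin k → Fin b → Fin (Np+1))) =>
        (fun A : Fin d → Fin b =>
          ∑ S : Fin d → Fin k, ((q.1 S : ℕ) : ℝ)/NW * ∏ i, ((q.2 i (S i) (A i) : ℕ) : ℝ)/Np))
      (Finset.univ.filter (fun q => (∑ S, (q.1 S : ℕ)) = NW ∧
        ∀ i j, (∑ a, (q.2 i j a : ℕ)) = Np)), ?_, ?_, ?_⟩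
  · -- membership in TuckerTensors
    intro T hT
    rw [Finset.mem_image] at hT
    obtain ⟨q, hq, rfl⟩ := hT
    rw [Finset.mem_filter] at hq
    obtain ⟨-, hq1, hq2⟩ := hq
    refine ⟨fun S => ((q.1 S : ℕ) : ℝ)/NW, ⟨fun S => by positivity, ?_⟩,
      fun i j a => ((q.2 i j a : ℕ) : ℝ)/Np, fun i j => ⟨fun a => by positivity, ?_⟩, rfl⟩
    · rw [← Finset.sum_div, ← Nat.cast_sum, hq1, div_self hNWR.ne']
    · rw [← Finset.sum_div, ← Nat.cast_sum, hq2 i j, div_self hNpR.ne']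
  · -- cardinality
    have hle : (Finset.image
        (fun q : (((Fin d → Fin k) → Fin (NW+1)) × (Fin d → Fin k → Fin b → Fin (Np+1))) =>
          (fun A : Fin d → Fin b =>
            ∑ S : Fin d → Fin k, ((q.1 S : ℕ) : ℝ)/NW * ∏ i, ((q.2 i (S i) (A i) : ℕ) : ℝ)/Np))
        (Finset.univ.filter (fun q => (∑ S, (q.1 S : ℕ)) = NW ∧
          ∀ i j, (∑ a, (q.2 i j a : ℕ)) = Np))).card ≤
        Fintype.card (((Fin d → Fin k) → Fin (NW+1)) ×
          (Fin d → Fin k → Fin b → Fin (Np+1))) := by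
      refine le_trans Finset.card_image_le (le_trans (Finset.card_filter_le _ _) ?_)
      rw [Finset.card_univ]
    have hcardP : Fintype.card (((Fin d → Fin k) → Fin (NW+1)) ×
        (Fin d → Fin k → Fin b → Fin (Np+1))) = (NW+1)^(k^d) * (Np+1)^(b*d*k) := by
      simp only [Fintype.card_prod, Fintype.card_fun, Fintype.card_fin]
      rw [← pow_mul, ← pow_mul, show b*(k*d) = b*d*k by ring]
    rw [hcardP] at hle
    calc ((Finset.image _ _).card : ℝ)
        ≤ (((NW+1)^(k^d) * (Np+1)^(b*d*k) : ℕ) : ℝ) := by exact_mod_cast hle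
      _ = ((NW:ℝ)+1)^(k^d) * ((Np:ℝ)+1)^(b*d*k) := by push_cast; ring
      _ ≤ (4 * k ^ d / ε) ^ (k ^ d) * (4 * b * d / ε) ^ (b * d * k) := by
          have h1 : (0:ℝ) ≤ (NW:ℝ)+1 := by positivity
          have h2 : (0:ℝ) ≤ (Np:ℝ)+1 := by positivity
          have e1 : (4 * (k:ℝ) ^ d / ε) = 4*(k:ℝ)^d/ε := by ring
          have e2 : (4 * (b:ℝ) * d / ε) = 4*(b:ℝ)*(d:ℝ)/ε := by ring
          exact mul_le_mul (pow_le_pow_left₀ h1 (by rw [e1]; exact hNW1) _)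
            (pow_le_pow_left₀ h2 (by rw [e2]; exact hNp1) _)
            (by positivity) (by positivity)
      _ = (4 * b * d / ε) ^ (b * d * k) * (4 * k ^ d / ε) ^ (k ^ d) := by ring
  · -- coverage
    intro T hT
    obtain ⟨W, hW, p, hp, rfl⟩ := hT
    obtain ⟨n, hn_le, hn_sum, hn_err⟩ := simplex_round NW hNWpos W hW.1 hW.2
    have hcardW : (Fintype.card (Fin d → Fin k) : ℝ) = (k:ℝ)^d := by
      rw [Fintype.card_fun, Fintype.card_fin, Fintype.card_fin]; push_cast; ring
    rw [hcardW] at hn_err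
    choose m hm_le hm_sum hm_err using fun i j =>
      simplex_round Np hNppos (p i j) ((hp i j).1) ((hp i j).2)
    have hm_err' : ∀ i j, ∑ a, |p i j a - (m i j a : ℝ)/Np| ≤ ε/(2*d) := by
      intro i j
      refine le_trans (hm_err i j) ?_
      rw [Fintype.card_fin]
      exact hradp
    refine ⟨_, Finset.mem_image.mpr
      ⟨(fun S => ⟨n S, Nat.lt_succ_of_le (hn_le S)⟩,
        fun i j a => ⟨m i j a, Nat.lt_succ_of_le (hm_le i j a)⟩),
       Finset.mem_filter.mpr ⟨Finset.mem_univ _, hn_sum, fun i j => hm_sum i j⟩, rfl⟩, ?_⟩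
    have := tucker_l1 W (fun S => (n S : ℝ)/NW) p (fun i j a => (m i j a : ℝ)/Np)
      ⟨fun S => by positivity, by rw [← Finset.sum_div, ← Nat.cast_sum, hn_sum, div_self hNWR.ne']⟩
      hp
      (fun i j => ⟨fun a => by positivity,
        by rw [← Finset.sum_div, ← Nat.cast_sum, hm_sum i j, div_self hNpR.ne']⟩)
      (ε/2) (ε/(2*d)) (by positivity)
      (le_trans hn_err hradW)
      hm_err'
    have heq : ε/2 + (d:ℝ)*(ε/(2*(d:ℝ))) = ε := by
      have hdne : (d:ℝ) ≠ 0 := by positivity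
      field_simp
      ring
    exact le_trans this (le_of_eq heq)
end

section
/- If sequences b(n), k(n) → ∞ satisfy n / (b k log b + k log k) → ∞, then there exists a sequence δ(n) → 0 with 0 < δ(n) ≤ 1 such that for all sufficiently large n, log( (4bd/δ)^{bdk} · (4k/δ)^k ) ≤ n. -/
open Filter Real

/-- If `b(n), k(n) → ∞` with `n / (b k log b + k log k) → ∞`, then there is a sequence
`δ(n) → 0`, `0 < δ(n) ≤ 1`, with `log((4bd/δ)^{bdk} (4k/δ)^k) ≤ n` eventually. -/
theorem multiview_cover_log_rate (d : ℕ) (hd : 0 < d) (b k : ℕ → ℕ)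
    (hb : Tendsto b atTop atTop) (hk : Tendsto k atTop atTop)
    (hrate : Tendsto (fun n : ℕ => (n : ℝ) /
        ((b n : ℝ) * k n * Real.log (b n) + (k n : ℝ) * Real.log (k n))) atTop atTop) :
    ∃ δ : ℕ → ℝ, (∀ n, 0 < δ n ∧ δ n ≤ 1) ∧ Tendsto δ atTop (nhds 0) ∧
      ∀ᶠ n in atTop,
        Real.log ((4 * (b n : ℝ) * d / δ n) ^ (b n * d * k n) *
          (4 * (k n : ℝ) / δ n) ^ (k n)) ≤ n := by
  have hlognn : ∀ m : ℕ, (0:ℝ) ≤ Real.log m := by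
    intro m
    rcases Nat.eq_zero_or_pos m with h | h
    · simp [h]
    · exact Real.log_nonneg (by exact_mod_cast h)
  refine ⟨fun n => 1 / (1 + Real.log (b n)), ?_, ?_, ?_⟩
  · intro n
    have h0 := hlognn (b n)
    constructor
    · positivity
    · rw [div_le_one (by linarith)]; linarith
  · have h1 : Tendsto (fun n => 1 + Real.log (b n)) atTop atTop := by
      apply tendsto_atTop_add_const_left
      exact Real.tendsto_log_atTop.comp (tendsto_natCast_atTop_atTop.comp hb)
    simpa [one_div, Pi.inv_def] using h1.inv_tendsto_atTop
  · filter_upwards [hb.eventually_ge_atTop (max (4*d) 3),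
      hk.eventually_ge_atTop 4,
      hrate.eventually_ge_atTop (3*(d:ℝ)+2)] with n hbn hkn hrn
    set B : ℝ := (b n : ℝ) with hBdef
    set K : ℝ := (k n : ℝ) with hKdef
    set D : ℝ := (d : ℝ) with hDdef
    have hB3 : (3:ℝ) ≤ B := by
      have h : (3:ℕ) ≤ b n := le_trans (le_max_right _ _) hbn
      rw [hBdef]; exact_mod_cast h
    have hB4d : 4 * D ≤ B := by
      have h : 4 * d ≤ b n := le_trans (le_max_left _ _) hbn
      rw [hBdef, hDdef]; exact_mod_cast h
    have hK4 : (4:ℝ) ≤ K := by rw [hKdef]; exact_mod_cast hkn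
    have hD1 : (1:ℝ) ≤ D := by rw [hDdef]; exact_mod_cast hd
    have hBpos : (0:ℝ) < B := by linarith
    have hKpos : (0:ℝ) < K := by linarith
    set L : ℝ := Real.log B with hLdef
    set M : ℝ := Real.log K with hMdef
    have hL1 : (1:ℝ) ≤ L := by
      rw [hLdef, Real.le_log_iff_exp_le hBpos]
      calc Real.exp 1 ≤ 2.7182818286 := Real.exp_one_lt_d9.le
        _ ≤ B := by linarith
    have hM1 : (1:ℝ) ≤ M := by
      rw [hMdef, Real.le_log_iff_exp_le hKpos]
      calc Real.exp 1 ≤ 2.7182818286 := Real.exp_one_lt_d9.le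
        _ ≤ K := by linarith
    set S : ℝ := 1 + L with hSdef
    have hSpos : (0:ℝ) < S := by linarith
    have hSB : S ≤ B := by
      have := Real.add_one_le_exp L
      rw [hLdef, Real.exp_log hBpos] at this
      linarith [this]
    -- rewrite the divisions
    have hδ1 : 4 * B * D / (1 / S) = 4 * B * D * S := by
      field_simp
    have hδ2 : 4 * K / (1 / S) = 4 * K * S := by
      field_simp
    have hXpos : (0:ℝ) < 4 * B * D * S := by positivity
    have hYpos : (0:ℝ) < 4 * K * S := by positivity
    -- log X ≤ 3 L
    have hX : Real.log (4 * B * D * S) ≤ 3 * L := by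
      have h1 : (4*D)*S ≤ B*B := mul_le_mul hB4d hSB hSpos.le (by positivity)
      have hle : 4 * B * D * S ≤ B ^ 3 := by nlinarith [mul_le_mul_of_nonneg_left h1 hBpos.le]
      have h2 := Real.log_le_log hXpos hle
      rw [Real.log_pow] at h2
      rw [hLdef]
      calc Real.log (4 * B * D * S) ≤ ((3:ℕ):ℝ) * Real.log B := h2
        _ = 3 * Real.log B := by norm_num
    -- log Y ≤ 2 M + L
    have hY : Real.log (4 * K * S) ≤ 2 * M + L := by
      rw [Real.log_mul (by positivity) (ne_of_gt hSpos),
        Real.log_mul (by norm_num) (ne_of_gt hKpos)]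
      have hlog4 : Real.log 4 ≤ M := by
        rw [hMdef]; exact Real.log_le_log (by norm_num) hK4
      have hlogS : Real.log S ≤ L := by
        rw [hLdef]; exact Real.log_le_log hSpos hSB
      have hMK : Real.log K = M := hMdef.symm
      linarith
    have hBKL : (0:ℝ) < B * K * L := mul_pos (mul_pos hBpos hKpos) (by linarith)
    have hKM : (0:ℝ) < K * M := mul_pos hKpos (by linarith)
    have hApos : (0:ℝ) < B * K * L + K * M := by linarith
    have hn : (3 * D + 2) * (B * K * L + K * M) ≤ n := by
      rw [le_div_iff₀ hApos] at hrn
      linarith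
    have hcast : ((b n * d * k n : ℕ) : ℝ) = B * D * K := by push_cast; ring
    calc Real.log ((4 * B * D / (1 / S)) ^ (b n * d * k n) * (4 * K / (1 / S)) ^ (k n))
        = (B * D * K) * Real.log (4 * B * D * S) + K * Real.log (4 * K * S) := by
          rw [hδ1, hδ2, Real.log_mul (by positivity) (by positivity),
            Real.log_pow, Real.log_pow, hcast]
      _ ≤ (B * D * K) * (3 * L) + K * (2 * M + L) := by
          have h1 : (0:ℝ) ≤ B * D * K := by positivity
          have h2 : (0:ℝ) ≤ K := by positivity
          exact add_le_add (mul_le_mul_of_nonneg_left hX h1)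
            (mul_le_mul_of_nonneg_left hY h2)
      _ ≤ (3 * D + 2) * (B * K * L + K * M) := by
          have hKL : (0:ℝ) ≤ K * L := mul_nonneg hKpos.le (by linarith)
          have hKLB : K * L ≤ B * (K * L) := le_mul_of_one_le_left hKL (by linarith)
          have hDKM : (0:ℝ) ≤ D * (K * M) := mul_nonneg (by linarith) hKM.le
          nlinarith [hKLB, hDKM, hKL]
      _ ≤ n := hn
end
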